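/- (Corollary.) In the setting of the bound on the Shapley value after replication — N finite with |N| = M, i ∈ N, i' ∉ N, N^R = N ∪ {i'}, v : Finset N^R → ℝ supermodular with v(N) > 0, and v(S ∪ {i}) − v(S) ≤ a_i for every S ⊆ N^R \ {i} with i' ∈ S — if additionally a_i = 0 and v(N^R) = v(N), then the normalized Shapley value of i after replication is at most half its value before replication: φ^R(i) ≤ φ(i)/2. -/

import Mathlib

open Finset

/-- The normalized Shapley value of party `i` for the characteristic function `v`
in the market `market` with `m = |market|` parties:
`φ(v,i) = (1/v(market)) · Σ_{S ⊆ market \ {i}} (|S|!(m−|S|−1)!/m!) · (v(S∪{i}) − v(S))`. -/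
noncomputable def shapley {ι : Type*} [DecidableEq ι] (market : Finset ι)
    (v : Finset ι → ℝ) (i : ι) : ℝ :=
  (1 / v market) * ∑ S ∈ (market.erase i).powerset,
    (S.card.factorial * (market.card - S.card - 1).factorial : ℝ)
      / (market.card.factorial : ℝ) * (v (insert i S) - v S)

lemma shapley_step {ι : Type*} [DecidableEq ι] (E : Finset ι) (n : ℕ) (hE : E.card = n)
    (Δ : Finset ι → ℝ)
    (mono : ∀ T ⊆ E, ∀ x ∈ E, x ∉ T → Δ T ≤ Δ (insert x T)) (s : ℕ) (hs : s < n) :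
    ((n : ℝ) - s) * ∑ S ∈ E.powersetCard s, Δ S ≤
      ((s : ℝ) + 1) * ∑ S ∈ E.powersetCard (s + 1), Δ S := by
  have key : ((s : ℝ) + 1) * ∑ S ∈ E.powersetCard (s + 1), Δ S
      = ∑ T ∈ E.powersetCard s, ∑ x ∈ E \ T, Δ (insert x T) := by
    rw [Finset.mul_sum]
    have l1 : ∀ S ∈ E.powersetCard (s + 1), ((s : ℝ) + 1) * Δ S = ∑ x ∈ S, Δ S := by
      intro S hS
      rw [Finset.sum_const, (Finset.mem_powersetCard.1 hS).2, nsmul_eq_mul]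
      push_cast
      ring
    rw [Finset.sum_congr rfl l1, Finset.sum_sigma', Finset.sum_sigma']
    refine Finset.sum_nbij' (fun p => ⟨p.1.erase p.2, p.2⟩)
      (fun p => ⟨insert p.2 p.1, p.2⟩) ?_ ?_ ?_ ?_ ?_
    · rintro ⟨S, x⟩ hp
      simp only [Finset.mem_sigma, Finset.mem_powersetCard] at hp ⊢
      obtain ⟨⟨hSE, hcard⟩, hx⟩ := hp
      refine ⟨⟨(Finset.erase_subset _ _).trans hSE, ?_⟩, ?_⟩
      · rw [Finset.card_erase_of_mem hx, hcard]; rfl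
      · simp [Finset.mem_sdiff, hSE hx]
    · rintro ⟨T, x⟩ hp
      simp only [Finset.mem_sigma, Finset.mem_powersetCard, Finset.mem_sdiff] at hp ⊢
      obtain ⟨⟨hTE, hcard⟩, hxE, hxT⟩ := hp
      refine ⟨⟨Finset.insert_subset hxE hTE, ?_⟩, Finset.mem_insert_self _ _⟩
      rw [Finset.card_insert_of_notMem hxT, hcard]
    · rintro ⟨S, x⟩ hp
      simp only [Finset.mem_sigma] at hp
      simp [Finset.insert_erase hp.2]
    · rintro ⟨T, x⟩ hp
      simp only [Finset.mem_sigma, Finset.mem_sdiff] at hp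
      simp [Finset.erase_insert hp.2.2]
    · rintro ⟨S, x⟩ hp
      simp only [Finset.mem_sigma] at hp
      simp [Finset.insert_erase hp.2]
  rw [key]
  have cast1 : ((n : ℝ) - s) = ((n - s : ℕ) : ℝ) := by
    rw [Nat.cast_sub hs.le]
  rw [cast1, Finset.mul_sum]
  apply Finset.sum_le_sum
  intro T hT
  obtain ⟨hTE, hTcard⟩ := Finset.mem_powersetCard.1 hT
  have hcardsd : (E \ T).card = n - s := by
    rw [Finset.card_sdiff_of_subset hTE, hE, hTcard]
  calc ((n - s : ℕ) : ℝ) * Δ T = ∑ _x ∈ E \ T, Δ T := by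
        rw [Finset.sum_const, hcardsd, nsmul_eq_mul]
    _ ≤ ∑ x ∈ E \ T, Δ (insert x T) := by
        apply Finset.sum_le_sum
        intro x hx
        obtain ⟨hxE, hxT⟩ := Finset.mem_sdiff.1 hx
        exact mono T hTE x hxE hxT

lemma shapley_core {ι : Type*} [DecidableEq ι] (E : Finset ι) (n : ℕ) (hE : E.card = n)
    (Δ : Finset ι → ℝ)
    (mono : ∀ T ⊆ E, ∀ x ∈ E, x ∉ T → Δ T ≤ Δ (insert x T)) :
    0 ≤ ∑ S ∈ E.powerset,
      (S.card.factorial * (n - S.card).factorial : ℝ) * ((2 * S.card : ℝ) - n) * Δ S := by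
  set f : ℕ → ℝ := fun s => ∑ S ∈ E.powersetCard s, Δ S with hf
  set h : ℕ → ℝ := fun s => (s.factorial * (n - s).factorial : ℝ) * f s with hh
  -- rewrite the sum as a sum over sizes
  have hsum : ∑ S ∈ E.powerset,
      (S.card.factorial * (n - S.card).factorial : ℝ) * ((2 * S.card : ℝ) - n) * Δ S
      = ∑ s ∈ Finset.range (n + 1), ((2 * s : ℝ) - n) * h s := by
    rw [Finset.sum_powerset, hE]
    refine Finset.sum_congr rfl fun s _ => ?_
    rw [hh]
    simp only
    rw [hf]
    simp only
    rw [Finset.mul_sum, Finset.mul_sum]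
    refine Finset.sum_congr rfl fun S hS => ?_
    rw [(Finset.mem_powersetCard.1 hS).2]
    ring
  rw [hsum]
  -- step inequality for h
  have hstep : ∀ s, s < n → h s ≤ h (s + 1) := by
    intro s hs
    obtain ⟨k, rfl⟩ : ∃ k, n = s + (k + 1) := ⟨n - s - 1, by omega⟩
    have e1 : s + (k + 1) - s = k + 1 := by omega
    have e2 : s + (k + 1) - (s + 1) = k := by omega
    have hst := shapley_step E _ hE Δ mono s hs
    rw [hh]
    simp only [e1, e2]
    have hcast : ((s + (k + 1) : ℕ) : ℝ) - s = (k : ℝ) + 1 := by push_cast; ring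
    rw [hcast] at hst
    have hfac : (0 : ℝ) < (s.factorial : ℝ) * (k.factorial : ℝ) := by
      positivity
    calc (s.factorial * (k + 1).factorial : ℝ) * f s
        = ((s.factorial : ℝ) * k.factorial) * (((k : ℝ) + 1) * f s) := by
          rw [Nat.factorial_succ]; push_cast; ring
      _ ≤ ((s.factorial : ℝ) * k.factorial) * (((s : ℝ) + 1) * f (s + 1)) := by
          apply mul_le_mul_of_nonneg_left hst hfac.le
      _ = ((s + 1).factorial * k.factorial : ℝ) * f (s + 1) := by
          rw [Nat.factorial_succ]; push_cast; ring
  have hmono : ∀ a b, a ≤ b → b ≤ n → h a ≤ h b := by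
    intro a b hab hbn
    induction b, hab using Nat.le_induction with
    | base => exact le_rfl
    | succ b hab ih => exact (ih (by omega)).trans (hstep b (by omega))
  -- reflection
  have hrefl : ∑ s ∈ Finset.range (n + 1), ((2 * s : ℝ) - n) * h s
      = ∑ s ∈ Finset.range (n + 1), ((2 * (n - s : ℕ) : ℝ) - n) * h (n - s) := by
    rw [← Finset.sum_range_reflect (fun s => ((2 * s : ℝ) - n) * h s) (n + 1)]
    exact Finset.sum_congr rfl fun s hs => by simp
  have h2 : 0 ≤ ∑ s ∈ Finset.range (n + 1), ((2 * s : ℝ) - n) * (h s - h (n - s)) := by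
    apply Finset.sum_nonneg
    intro s hs
    have hsn : s ≤ n := by have := Finset.mem_range.1 hs; omega
    rcases le_or_gt n (2 * s) with hc | hc
    · apply mul_nonneg
      · have : (n : ℝ) ≤ 2 * s := by exact_mod_cast hc
        linarith
      · have := hmono (n - s) s (by omega) hsn
        linarith
    · apply mul_nonneg_of_nonpos_of_nonpos
      · have : (2 * s : ℝ) ≤ n := by exact_mod_cast hc.le
        linarith
      · have := hmono s (n - s) (by omega) (by omega)
        linarith
  have hsplit : ∑ s ∈ Finset.range (n + 1), ((2 * s : ℝ) - n) * (h s - h (n - s))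
      = (∑ s ∈ Finset.range (n + 1), ((2 * s : ℝ) - n) * h s)
        - ∑ s ∈ Finset.range (n + 1), ((2 * s : ℝ) - n) * h (n - s) := by
    rw [← Finset.sum_sub_distrib]
    exact Finset.sum_congr rfl fun s _ => by ring
  have hneg : ∀ s ∈ Finset.range (n + 1), ((2 * (n - s : ℕ) : ℝ) - n) * h (n - s)
      = - (((2 * s : ℝ) - n) * h (n - s)) := by
    intro s hs
    have hsn : s ≤ n := by have := Finset.mem_range.1 hs; omega
    have : ((n - s : ℕ) : ℝ) = (n : ℝ) - s := by
      rw [Nat.cast_sub hsn]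
    rw [this]; ring
  rw [hsplit] at h2
  have hAB : ∑ s ∈ Finset.range (n + 1), ((2 * s : ℝ) - n) * h s
      = - ∑ s ∈ Finset.range (n + 1), ((2 * s : ℝ) - n) * h (n - s) := by
    rw [hrefl, Finset.sum_congr rfl hneg, Finset.sum_neg_distrib]
  linarith

/-- corollary: in the setting of the bound on the Shapley value
after replication, if additionally `a_i = 0` and `v(N^R) = v(N)`, then the
normalized Shapley value of `i` after replication is at most half its value
before replication: `φ^R(i) ≤ φ(i)/2`. -/
theorem shapley_replication_bound_zero_gain {ι : Type*} [DecidableEq ι] (N : Finset ι)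
    (M : ℕ) (hcard : N.card = M) (hM : 1 ≤ M)
    (i : ι) (hi : i ∈ N) (i' : ι) (hi' : i' ∉ N)
    (NR : Finset ι) (hNR : NR = insert i' N)
    (v : Finset ι → ℝ) (a_i : ℝ)
    (hsuper : ∀ R Q : Finset ι, R ⊆ Q → ∀ x ∉ Q,
      v (insert x R) - v R ≤ v (insert x Q) - v Q)
    (hvN : 0 < v N)
    (hmarg : ∀ S ⊆ NR.erase i, i' ∈ S → v (insert i S) - v S ≤ a_i)
    (hai : a_i = 0) (hveq : v NR = v N) :
    shapley NR v i ≤ shapley N v i / 2 := by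
  obtain ⟨n, rfl⟩ : ∃ n, M = n + 1 := ⟨M - 1, by omega⟩
  have hne : i' ≠ i := fun h => hi' (h ▸ hi)
  have hiE : i' ∉ N.erase i := fun h => hi' (Finset.mem_of_mem_erase h)
  have hEcard : (N.erase i).card = n := by rw [Finset.card_erase_of_mem hi, hcard]; omega
  have hNRe : NR.erase i = insert i' (N.erase i) := by
    rw [hNR, Finset.erase_insert_of_ne hne]
  have hNRcard : NR.card = n + 2 := by
    rw [hNR, Finset.card_insert_of_notMem hi', hcard]
  have hdisj : Disjoint (N.erase i).powerset ((N.erase i).powerset.image (insert i')) := by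
    rw [Finset.disjoint_right]
    rintro S hS hS'
    obtain ⟨T, hT, rfl⟩ := Finset.mem_image.1 hS
    exact hiE (Finset.mem_powerset.1 hS' (Finset.mem_insert_self i' T))
  have hinj : ∀ T ∈ (N.erase i).powerset, ∀ T' ∈ (N.erase i).powerset,
      insert i' T = insert i' T' → T = T' := by
    intro T hT T' hT' hins
    have h1 : i' ∉ T := fun h => hiE (Finset.mem_powerset.1 hT h)
    have h2 : i' ∉ T' := fun h => hiE (Finset.mem_powerset.1 hT' h)
    rw [← Finset.erase_insert h1, ← Finset.erase_insert h2, hins]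
  rw [shapley, shapley, hveq, hNRe, hNRcard, hcard, Finset.powerset_insert,
    Finset.sum_union hdisj, Finset.sum_image hinj]
  have monoE : ∀ T ⊆ N.erase i, ∀ x ∈ N.erase i, x ∉ T →
      v (insert i T) - v T ≤ v (insert i (insert x T)) - v (insert x T) := by
    intro T hT x hx hxT
    have hix : i ∉ insert x T := by
      simp only [Finset.mem_insert]
      push_neg
      exact ⟨fun h => Finset.notMem_erase i N (h ▸ hx),
        fun h => Finset.notMem_erase i N (hT h)⟩
    exact hsuper T (insert x T) (Finset.subset_insert _ _) i hix
  have hB : ∑ S ∈ (N.erase i).powerset,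
      ((insert i' S).card.factorial : ℝ) * ((n + 2 - (insert i' S).card - 1).factorial : ℝ)
        / ((n + 2).factorial : ℝ) * (v (insert i (insert i' S)) - v (insert i' S)) ≤ 0 := by
    apply Finset.sum_nonpos
    intro S hS
    have hd : v (insert i (insert i' S)) - v (insert i' S) ≤ 0 := by
      rw [← hai]
      apply hmarg
      · rw [hNRe]
        exact Finset.insert_subset_insert _ (Finset.mem_powerset.1 hS)
      · exact Finset.mem_insert_self _ _
    have hw : (0 : ℝ) ≤ ((insert i' S).card.factorial : ℝ)
        * ((n + 2 - (insert i' S).card - 1).factorial : ℝ) / ((n + 2).factorial : ℝ) := by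
      positivity
    exact mul_nonpos_iff.2 (Or.inl ⟨hw, hd⟩)
  have hG := shapley_core (N.erase i) n hEcard (fun S => v (insert i S) - v S) monoE
  have hA : ∑ S ∈ (N.erase i).powerset,
      ((S.card.factorial : ℝ) * ((n + 2 - S.card - 1).factorial : ℝ) / ((n + 2).factorial : ℝ))
        * (v (insert i S) - v S)
      ≤ (∑ S ∈ (N.erase i).powerset,
      ((S.card.factorial : ℝ) * ((n + 1 - S.card - 1).factorial : ℝ) / ((n + 1).factorial : ℝ))
        * (v (insert i S) - v S)) / 2 := by
    have key : (∑ S ∈ (N.erase i).powerset,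
        ((S.card.factorial : ℝ) * ((n + 1 - S.card - 1).factorial : ℝ) / ((n + 1).factorial : ℝ))
          * (v (insert i S) - v S)) / 2
        - ∑ S ∈ (N.erase i).powerset,
        ((S.card.factorial : ℝ) * ((n + 2 - S.card - 1).factorial : ℝ) / ((n + 2).factorial : ℝ))
          * (v (insert i S) - v S)
        = ∑ S ∈ (N.erase i).powerset, (1 / (2 * ((n + 2).factorial : ℝ)))
          * ((S.card.factorial * (n - S.card).factorial : ℝ) * ((2 * S.card : ℝ) - n)
            * (v (insert i S) - v S)) := by
      rw [Finset.sum_div, ← Finset.sum_sub_distrib]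
      refine Finset.sum_congr rfl fun S hS => ?_
      have hk : S.card ≤ n := by
        have := Finset.card_le_card (Finset.mem_powerset.1 hS)
        omega
      obtain ⟨m, hm⟩ : ∃ m, n = S.card + m := ⟨n - S.card, by omega⟩
      have e1 : n + 1 - S.card - 1 = m := by omega
      have e2 : n + 2 - S.card - 1 = m + 1 := by omega
      have e3 : n - S.card = m := by omega
      rw [e1, e2, e3, hm]
      rw [show S.card + m + 2 = (S.card + m + 1) + 1 from rfl,
        Nat.factorial_succ (S.card + m + 1), Nat.factorial_succ (S.card + m),
        Nat.factorial_succ m]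
      have h1 : ((S.card + m).factorial : ℝ) ≠ 0 :=
        Nat.cast_ne_zero.2 (Nat.factorial_ne_zero _)
      have h2 : ((S.card + m : ℕ) : ℝ) + 1 ≠ 0 := Nat.cast_add_one_ne_zero _
      have h3 : ((S.card + m + 1 : ℕ) : ℝ) + 1 ≠ 0 := Nat.cast_add_one_ne_zero _
      push_cast
      clear hm hk e1 e2 e3 hS
      field_simp
      ring
    have hfac : (0 : ℝ) < 1 / (2 * ((n + 2).factorial : ℝ)) := by positivity
    have hsum : 0 ≤ ∑ S ∈ (N.erase i).powerset, (1 / (2 * ((n + 2).factorial : ℝ)))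
        * ((S.card.factorial * (n - S.card).factorial : ℝ) * ((2 * S.card : ℝ) - n)
          * (v (insert i S) - v S)) := by
      rw [← Finset.mul_sum]
      exact mul_nonneg hfac.le hG
    linarith
  have hv : (0 : ℝ) < 1 / v N := by positivity
  calc 1 / v N *
      ((∑ S ∈ (N.erase i).powerset,
        ((S.card.factorial : ℝ) * ((n + 2 - S.card - 1).factorial : ℝ) / ((n + 2).factorial : ℝ))
          * (v (insert i S) - v S)) +
       ∑ S ∈ (N.erase i).powerset,
        ((insert i' S).card.factorial : ℝ) * ((n + 2 - (insert i' S).card - 1).factorial : ℝ)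
          / ((n + 2).factorial : ℝ) * (v (insert i (insert i' S)) - v (insert i' S)))
      ≤ 1 / v N * ((∑ S ∈ (N.erase i).powerset,
        ((S.card.factorial : ℝ) * ((n + 1 - S.card - 1).factorial : ℝ) / ((n + 1).factorial : ℝ))
          * (v (insert i S) - v S)) / 2) := by
        apply mul_le_mul_of_nonneg_left _ hv.le
        linarith
    _ = (1 / v N * ∑ S ∈ (N.erase i).powerset,
        ((S.card.factorial : ℝ) * ((n + 1 - S.card - 1).factorial : ℝ) / ((n + 1).factorial : ℝ))
          * (v (insert i S) - v S)) / 2 := by ring
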